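/- Let m ≥ 1, ε ∈ {1, −1}, and let Q(z) be a monic polynomial of degree m with real coefficients all of whose roots lie strictly inside the open unit disk. Define P(z) = z^m·Q(z) + ε·Q*(z), where Q*(z) = z^m·Q(1/z) is the reciprocal polynomial (with conjugated coefficients, which are real here). Then all roots of P lie on the unit circle |z| = 1. -/

import Mathlib

open Polynomial

private lemma cohn_prod_lt {s : Multiset ℂ} (hs : s ≠ 0) (f g : ℂ → ℝ)
    (h0 : ∀ a ∈ s, 0 ≤ f a) (h : ∀ a ∈ s, f a < g a) :
    (s.map f).prod < (s.map g).prod := by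
  induction s using Multiset.induction with
  | empty => simp at hs
  | cons a t ih =>
    rcases eq_or_ne t 0 with rfl | ht
    · simpa using h a (by simp)
    · simp only [Multiset.map_cons, Multiset.prod_cons]
      have hf : 0 ≤ (t.map f).prod := by
        apply Multiset.prod_nonneg
        intro x hx
        obtain ⟨y, hy, rfl⟩ := Multiset.mem_map.1 hx
        exact h0 y (Multiset.mem_cons_of_mem hy)
      exact mul_lt_mul'' (h a (Multiset.mem_cons_self a t))
        (ih ht (fun x hx => h0 x (Multiset.mem_cons_of_mem hx))
          (fun x hx => h x (Multiset.mem_cons_of_mem hx)))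
        (h0 a (Multiset.mem_cons_self a t)) hf

private lemma cohn_key_gt (α z : ℂ) (hα : ‖α‖ < 1) (hz : 1 < ‖z‖) :
    ‖1 - α * (starRingEnd ℂ) z‖ < ‖z‖ * ‖z - α‖ := by
  have hα2 : Complex.normSq α < 1 := by
    have := Complex.sq_norm α; nlinarith [norm_nonneg α]
  have hz2 : 1 < Complex.normSq z := by
    have := Complex.sq_norm z; nlinarith [norm_nonneg z]
  have h2 : ‖1 - α * (starRingEnd ℂ) z‖ ^ 2
      < (‖z‖ * ‖z - α‖) ^ 2 := by
    rw [mul_pow, Complex.sq_norm, Complex.sq_norm, Complex.sq_norm]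
    simp only [Complex.normSq_apply, Complex.sub_re, Complex.sub_im, Complex.mul_re,
      Complex.mul_im, Complex.one_re, Complex.one_im, Complex.conj_re, Complex.conj_im] at *
    nlinarith [sq_nonneg (z.re - α.re), sq_nonneg (z.im - α.im),
      mul_pos (sub_pos.2 hz2) (by nlinarith [sq_nonneg (z.re - α.re), sq_nonneg (z.im - α.im)] :
        (0:ℝ) < z.re^2 + z.im^2 + 1 - 2*(α.re*z.re + α.im*z.im))]
  exact lt_of_pow_lt_pow_left₀ 2 (by positivity) h2

private lemma cohn_key_lt (α z : ℂ) (hα : ‖α‖ < 1) (hz : ‖z‖ < 1) :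
    ‖z‖ * ‖z - α‖ < ‖1 - α * (starRingEnd ℂ) z‖ := by
  have hα2 : Complex.normSq α < 1 := by
    have := Complex.sq_norm α; nlinarith [norm_nonneg α]
  have hz2 : Complex.normSq z < 1 := by
    have := Complex.sq_norm z; nlinarith [norm_nonneg z]
  have h2 : (‖z‖ * ‖z - α‖) ^ 2
      < ‖1 - α * (starRingEnd ℂ) z‖ ^ 2 := by
    rw [mul_pow, Complex.sq_norm, Complex.sq_norm, Complex.sq_norm]
    simp only [Complex.normSq_apply, Complex.sub_re, Complex.sub_im, Complex.mul_re,
      Complex.mul_im, Complex.one_re, Complex.one_im, Complex.conj_re, Complex.conj_im] at *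
    nlinarith [sq_nonneg (z.re - α.re), sq_nonneg (z.im - α.im),
      mul_pos (sub_pos.2 hz2) (by nlinarith [sq_nonneg (z.re - α.re), sq_nonneg (z.im - α.im)] :
        (0:ℝ) < z.re^2 + z.im^2 + 1 - 2*(α.re*z.re + α.im*z.im))]
  exact lt_of_pow_lt_pow_left₀ 2 (by positivity) h2

/-- Cohn-type criterion (sufficiency): if Q is a monic real polynomial of degree m ≥ 1
with all complex roots strictly inside the unit disk and ε = ±1, then all complex roots of
P(z) = z^m·Q(z) + ε·Q*(z) lie on the unit circle, where Q* is the reciprocal polynomial. -/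
theorem stmt_6 (m : ℕ) (hm : 1 ≤ m) (ε : ℝ) (hε : ε = 1 ∨ ε = -1)
    (Q : Polynomial ℝ) (hQmonic : Q.Monic) (hQdeg : Q.natDegree = m)
    (hroots : ∀ z : ℂ, Polynomial.aeval z Q = 0 → ‖z‖ < 1) :
    ∀ z : ℂ,
      Polynomial.aeval z (Polynomial.X ^ m * Q + Polynomial.C ε * Q.reverse) = 0 →
        ‖z‖ = 1 := by
  intro z hz0
  set S := (Q.map (algebraMap ℝ ℂ)).roots with hS
  have hsplits : Splits (Q.map (algebraMap ℝ ℂ)) := IsAlgClosed.splits _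
  have hnp : ∀ s : Multiset ℂ, ‖s.prod‖ = (s.map (fun x => ‖x‖)).prod :=
    fun s => map_multiset_prod (normHom (α := ℂ)) s
  have hcard : Multiset.card S = m := by
    rw [hS, ← hsplits.natDegree_eq_card_roots, natDegree_map, hQdeg]
  have hSne : S ≠ 0 := by
    intro h
    rw [h] at hcard; simp at hcard; omega
  have hprod : Q.map (algebraMap ℝ ℂ) = (S.map fun a => X - C a).prod :=
    hsplits.eq_prod_roots_of_monic (hQmonic.map _)
  have heval : ∀ w : ℂ, aeval w Q = (S.map fun a => w - a).prod := by
    intro w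
    rw [aeval_def, ← eval_map, hprod, eval_multiset_prod, Multiset.map_map]
    simp
  have hmem : ∀ a ∈ S, ‖a‖ < 1 := by
    intro a ha
    apply hroots
    have := Polynomial.isRoot_of_mem_roots ha
    rwa [IsRoot, eval_map, ← aeval_def] at this
  have hzne : z ≠ 0 := by
    rintro rfl
    rw [map_add, map_mul, map_mul, map_pow, aeval_X, aeval_C,
      zero_pow (by omega : m ≠ 0), zero_mul, zero_add] at hz0
    have h0 : aeval (0:ℂ) Q.reverse = algebraMap ℝ ℂ (Q.reverse.coeff 0) := by
      rw [aeval_def, eval₂_at_zero]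
    rw [h0, coeff_zero_reverse, hQmonic.leadingCoeff] at hz0
    simp only [map_one, mul_one] at hz0
    rcases hε with rfl | rfl <;> simp at hz0
  rw [map_add, map_mul, map_mul, map_pow, aeval_X, aeval_C] at hz0
  have heqabs : ‖z ^ m * aeval z Q‖
      = ‖aeval z Q.reverse‖ := by
    have h1 : z ^ m * aeval z Q = -((algebraMap ℝ ℂ) ε * aeval z Q.reverse) :=
      eq_neg_of_add_eq_zero_left hz0
    rw [h1, norm_neg, norm_mul]
    have : ‖(algebraMap ℝ ℂ) ε‖ = 1 := by
      rcases hε with rfl | rfl <;> simp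
    rw [this, one_mul]
  have hrev : aeval z Q.reverse = z ^ m * aeval z⁻¹ Q := by
    haveI : Invertible (z⁻¹) := invertibleOfNonzero (inv_ne_zero hzne)
    have := eval₂_reverse_mul_pow (algebraMap ℝ ℂ) z⁻¹ Q
    rw [invOf_eq_inv z⁻¹, inv_inv, hQdeg] at this
    rw [aeval_def, aeval_def, ← this]
    field_simp
    rw [one_div, inv_pow, mul_assoc, mul_inv_cancel₀ (pow_ne_zero m hzne), mul_one]
  have hconj : ‖aeval z⁻¹ Q‖
      = ‖aeval ((starRingEnd ℂ) z)⁻¹ Q‖ := by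
    have : aeval (((starRingEnd ℂ) z)⁻¹) Q = (starRingEnd ℂ) (aeval z⁻¹ Q) := by
      rw [← map_inv₀]
      exact (aeval_algHom_apply (Complex.conjAe) z⁻¹ Q)
    rw [this, Complex.norm_conj]
  have hL : ‖z ^ m * aeval z Q‖
      = (S.map fun a => ‖z‖ * ‖z - a‖).prod := by
    rw [norm_mul, norm_pow, heval, hnp, Multiset.map_map,
      Multiset.prod_map_mul]
    congr 1
    rw [Multiset.map_const', Multiset.prod_replicate, hcard]
  have hR : ‖aeval z Q.reverse‖
      = (S.map fun a => ‖1 - a * (starRingEnd ℂ) z‖).prod := by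
    have hczne : (starRingEnd ℂ) z ≠ 0 := by simpa using hzne
    rw [hrev, norm_mul, norm_pow, hconj, heval, hnp,
      Multiset.map_map]
    rw [show ‖z‖ ^ m
        = (S.map fun _ => ‖z‖).prod by
      rw [Multiset.map_const', Multiset.prod_replicate, hcard], ← Multiset.prod_map_mul]
    apply congrArg
    apply Multiset.map_congr rfl
    intro a ha
    have habsc : ‖z‖ = ‖(starRingEnd ℂ) z‖ := (Complex.norm_conj z).symm
    rw [Function.comp_apply, habsc, ← norm_mul]
    congr 1
    field_simp
  by_contra habs
  rcases lt_or_gt_of_ne habs with hlt | hgt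
  · have : (S.map fun a => ‖z‖ * ‖z - a‖).prod
        < (S.map fun a => ‖1 - a * (starRingEnd ℂ) z‖).prod := by
      apply cohn_prod_lt hSne
      · intro a _; positivity
      · intro a ha; exact cohn_key_lt a z (hmem a ha) hlt
    rw [hL, hR] at heqabs
    exact absurd heqabs (ne_of_lt this)
  · have : (S.map fun a => ‖1 - a * (starRingEnd ℂ) z‖).prod
        < (S.map fun a => ‖z‖ * ‖z - a‖).prod := by
      apply cohn_prod_lt hSne
      · intro a _; positivity
      · intro a ha; exact cohn_key_gt a z (hmem a ha) hgt
    rw [hL, hR] at heqabs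
    exact absurd heqabs.symm (ne_of_lt this)
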